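/- arXiv:1708.09730 — 7 statements merged into one kernel-verified Lean document; each statement's English description precedes it below -/
import Mathlib

section
/- Let d ≥ 2 and let ζ ∈ ℂ be a primitive d-th root of unity. For integers i, j, i', j', the following are equivalent: (a) for every natural number l with 1 ≤ l ≤ d and every integer p one has ζ^{p·i + (2p+l-1)·j} · (∑_{k=0}^{l-1} ζ^{i·k}) = ζ^{p·i' + (2p+l-1)·j'} · (∑_{k=0}^{l-1} ζ^{i'·k}); (b) either (i' ≡ i mod d and j' ≡ j mod d) or (i' ≡ −i mod d and j' ≡ i + j mod d). -/
open Finset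

lemma orth (d : ℕ) (hd : 2 ≤ d) (r : ℂ) (hr : r ^ d = 1) :
    ∑ l ∈ range d, r ^ l = if r = 1 then (d : ℂ) else 0 := by
  split_ifs with h
  · simp [h]
  · rw [geom_sum_eq h, hr, sub_self, zero_div]

lemma key (d : ℕ) (hd : 2 ≤ d) (q q' t t' : ℂ)
    (hq : q ^ d = 1) (hq' : q' ^ d = 1) (ht : t ^ d = 1) (ht' : t' ^ d = 1)
    (hq1 : q ≠ 1) (hq1' : q' ≠ 1)
    (H : ∀ l : ℕ, l < d →
      t ^ l * (q ^ (l + 1) - 1) * (q' - 1) = t' ^ l * (q' ^ (l + 1) - 1) * (q - 1)) :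
    (q' = q ∧ t' = t) ∨ (q' = q⁻¹ ∧ t' = t * q) := by
  have hd0 : (d : ℂ) ≠ 0 := Nat.cast_ne_zero.mpr (by omega)
  have nz : ∀ a : ℂ, a ^ d = 1 → a ≠ 0 := by
    intro a ha h
    rw [h, zero_pow (by omega : d ≠ 0)] at ha
    exact zero_ne_one ha
  have hq0 : q ≠ 0 := nz q hq
  have hq0' : q' ≠ 0 := nz q' hq'
  have ht0 : t ≠ 0 := nz t ht
  have ht0' : t' ≠ 0 := nz t' ht'
  -- extend H to all l by periodicity
  have Hall : ∀ l : ℕ,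
      t ^ l * (q ^ (l + 1) - 1) * (q' - 1) = t' ^ l * (q' ^ (l + 1) - 1) * (q - 1) := by
    intro l
    induction l using Nat.strong_induction_on with
    | _ l ih =>
      by_cases hl : l < d
      · exact H l hl
      · have hld : l = (l - d) + d := by omega
        have ihd := ih (l - d) (by omega)
        rw [hld]
        have e1 : t ^ (l - d + d) = t ^ (l - d) := by rw [pow_add, ht, mul_one]
        have e2 : t' ^ (l - d + d) = t' ^ (l - d) := by rw [pow_add, ht', mul_one]
        have e3 : q ^ (l - d + d + 1) = q ^ (l - d + 1) := by
          rw [show l - d + d + 1 = (l - d + 1) + d by omega, pow_add, hq, mul_one]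
        have e4 : q' ^ (l - d + d + 1) = q' ^ (l - d + 1) := by
          rw [show l - d + d + 1 = (l - d + 1) + d by omega, pow_add, hq', mul_one]
        rw [e1, e2, e3, e4]; exact ihd
  have hy0 : t * q ≠ 0 := mul_ne_zero ht0 hq0
  set y : ℂ := (t * q)⁻¹ with hy
  have hterm : ∀ l ∈ range d,
      q * (q' - 1) * ((t * q) * y) ^ l - (q' - 1) * (t * y) ^ l
        - q' * (q - 1) * ((t' * q') * y) ^ l + (q - 1) * (t' * y) ^ l = 0 := by
    intro l _
    linear_combination y ^ l * (Hall l)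
  have hsum :
      q * (q' - 1) * (∑ l ∈ range d, ((t * q) * y) ^ l)
        - (q' - 1) * (∑ l ∈ range d, (t * y) ^ l)
        - q' * (q - 1) * (∑ l ∈ range d, ((t' * q') * y) ^ l)
        + (q - 1) * (∑ l ∈ range d, (t' * y) ^ l) = 0 := by
    rw [mul_sum, mul_sum, mul_sum, mul_sum, ← sum_sub_distrib, ← sum_sub_distrib,
      ← sum_add_distrib]
    exact Finset.sum_eq_zero hterm
  have hyd : y ^ d = 1 := by
    rw [hy, inv_pow, mul_pow, ht, hq, mul_one, inv_one]
  have s1 : ∑ l ∈ range d, ((t * q) * y) ^ l = (d : ℂ) := by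
    rw [hy, mul_inv_cancel₀ hy0]; simp
  have s2 : ∑ l ∈ range d, (t * y) ^ l = 0 := by
    rw [orth d hd _ (by rw [mul_pow, ht, hyd, mul_one]), hy]
    simp only [mul_inv_eq_one₀ hy0]
    rw [if_neg]
    intro h
    exact hq1 (mul_left_cancel₀ ht0 (by rw [mul_one]; exact h.symm))
  have s3 : ∑ l ∈ range d, ((t' * q') * y) ^ l
      = if t' * q' = t * q then (d : ℂ) else 0 := by
    rw [orth d hd _ (by rw [mul_pow, mul_pow, ht', hq', hyd, mul_one, mul_one]), hy]
    simp only [mul_inv_eq_one₀ hy0]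
  have s4 : ∑ l ∈ range d, (t' * y) ^ l = if t' = t * q then (d : ℂ) else 0 := by
    rw [orth d hd _ (by rw [mul_pow, ht', hyd, mul_one]), hy]
    simp only [mul_inv_eq_one₀ hy0]
  rw [s1, s2, s3, s4] at hsum
  by_cases h3 : t' * q' = t * q <;> by_cases h4 : t' = t * q
  · exfalso
    rw [h4] at h3
    exact hq1' (mul_left_cancel₀ hy0 (by rw [mul_one]; exact h3))
  · rw [if_pos h3, if_neg h4] at hsum
    left
    have h5 : (q' - q) * (d : ℂ) = 0 := by linear_combination hsum
    have hqq : q' = q := sub_eq_zero.mp ((mul_eq_zero.mp h5).resolve_right hd0)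
    refine ⟨hqq, ?_⟩
    rw [hqq] at h3
    exact mul_right_cancel₀ hq0 h3
  · rw [if_neg h3, if_pos h4] at hsum
    right
    refine ⟨?_, h4⟩
    have h5 : (q * q' - 1) * (d : ℂ) = 0 := by linear_combination hsum
    have hqq : q * q' = 1 := sub_eq_zero.mp ((mul_eq_zero.mp h5).resolve_right hd0)
    field_simp
    linear_combination hqq
  · rw [if_neg h3, if_neg h4] at hsum
    exfalso
    have h5 : q * (q' - 1) * (d : ℂ) = 0 := by linear_combination hsum
    rcases mul_eq_zero.mp h5 with h | h
    · rcases mul_eq_zero.mp h with h | h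
      · exact hq0 h
      · exact hq1' (sub_eq_zero.mp h)
    · exact hd0 h

section main

variable {d : ℕ} {ζ : ℂ}

lemma zpow_iff (hd : 2 ≤ d) (hζ : IsPrimitiveRoot ζ d) (a b : ℤ) :
    ζ ^ a = ζ ^ b ↔ a ≡ b [ZMOD (d : ℤ)] := by
  have hz : ζ ≠ 0 := hζ.ne_zero (by omega)
  constructor
  · intro h
    have h1 : ζ ^ (a - b) = 1 := by
      rw [zpow_sub₀ hz, h, div_self (zpow_ne_zero _ hz)]
    have h2 : (d : ℤ) ∣ a - b := (hζ.zpow_eq_one_iff_dvd _).mp h1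
    exact Int.ModEq.symm (Int.modEq_iff_dvd.mpr h2)
  · intro h
    have h2 : (d : ℤ) ∣ a - b := Int.ModEq.dvd h.symm
    have h1 : ζ ^ (a - b) = 1 := (hζ.zpow_eq_one_iff_dvd _).mpr h2
    rw [zpow_sub₀ hz] at h1
    exact (div_eq_one_iff_eq (zpow_ne_zero _ hz)).mp h1

lemma refl_eq (hd : 2 ≤ d) (hζ : IsPrimitiveRoot ζ d) (i j : ℤ) (l : ℕ) (hl1 : 1 ≤ l)
    (p : ℤ) :
    ζ ^ (p * (-i) + (2 * p + (l : ℤ) - 1) * (i + j)) *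
        (∑ k ∈ Finset.range l, ζ ^ ((-i) * (k : ℤ))) =
      ζ ^ (p * i + (2 * p + (l : ℤ) - 1) * j) * (∑ k ∈ Finset.range l, ζ ^ (i * (k : ℤ))) := by
  have hz : ζ ≠ 0 := hζ.ne_zero (by omega)
  have hsum : (∑ k ∈ Finset.range l, ζ ^ ((-i) * (k : ℤ)))
      = ζ ^ ((-i) * ((l : ℤ) - 1)) * ∑ k ∈ Finset.range l, ζ ^ (i * (k : ℤ)) := by
    rw [← Finset.sum_range_reflect (fun k => ζ ^ ((-i) * (k : ℤ))) l, Finset.mul_sum]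
    refine Finset.sum_congr rfl fun k hk => ?_
    have hkl : k < l := Finset.mem_range.mp hk
    have hcast : ((l - 1 - k : ℕ) : ℤ) = (l : ℤ) - 1 - k := by
      push_cast [Nat.cast_sub (by omega : k ≤ l - 1), Nat.cast_sub (by omega : 1 ≤ l)]
      ring
    rw [hcast, ← zpow_add₀ hz]
    congr 1
    ring
  rw [hsum, ← mul_assoc, ← zpow_add₀ hz]
  congr 2
  ring

theorem stmt0 (d : ℕ) (hd : 2 ≤ d) (ζ : ℂ) (hζ : IsPrimitiveRoot ζ d)
    (i j i' j' : ℤ) :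
    (∀ l : ℕ, 1 ≤ l → l ≤ d → ∀ p : ℤ,
      ζ ^ (p * i + (2 * p + (l : ℤ) - 1) * j) * (∑ k ∈ Finset.range l, ζ ^ (i * (k : ℤ))) =
      ζ ^ (p * i' + (2 * p + (l : ℤ) - 1) * j') * (∑ k ∈ Finset.range l, ζ ^ (i' * (k : ℤ)))) ↔
    ((i' ≡ i [ZMOD (d : ℤ)] ∧ j' ≡ j [ZMOD (d : ℤ)]) ∨
     (i' ≡ -i [ZMOD (d : ℤ)] ∧ j' ≡ i + j [ZMOD (d : ℤ)])) := by
  have hz : ζ ≠ 0 := hζ.ne_zero (by omega)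
  have hzd : ζ ^ (d : ℕ) = 1 := hζ.pow_eq_one
  have zd : ∀ m : ℤ, (ζ ^ m) ^ d = 1 := by
    intro m
    rw [← zpow_natCast (ζ ^ m), ← zpow_mul, mul_comm, zpow_mul, zpow_natCast, hzd, one_zpow]
  constructor
  · intro H
    set q : ℂ := ζ ^ i with hqdef
    set q' : ℂ := ζ ^ i' with hqdef'
    set t : ℂ := ζ ^ j with htdef
    set t' : ℂ := ζ ^ j' with htdef'
    -- specialize to p = 0 and convert to powers of q, t
    have Hp0 : ∀ l : ℕ, 1 ≤ l → l ≤ d →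
        t ^ (l - 1) * (∑ k ∈ Finset.range l, q ^ k) =
        t' ^ (l - 1) * (∑ k ∈ Finset.range l, q' ^ k) := by
      intro l hl1 hl2
      have h := H l hl1 hl2 0
      have conv1 : ∀ a b : ℤ, ζ ^ ((0 : ℤ) * a + (2 * 0 + (l : ℤ) - 1) * b)
          = (ζ ^ b) ^ (l - 1) := by
        intro a b
        rw [show (0 : ℤ) * a + (2 * 0 + (l : ℤ) - 1) * b = b * ((l - 1 : ℕ) : ℤ) by
          have : ((l - 1 : ℕ) : ℤ) = (l : ℤ) - 1 := by omega
          rw [this]; ring, zpow_mul, zpow_natCast]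
      have conv2 : ∀ (a : ℤ) (k : ℕ), ζ ^ (a * (k : ℤ)) = (ζ ^ a) ^ k := by
        intro a k
        rw [zpow_mul, zpow_natCast]
      rw [conv1 i j, conv1 i' j'] at h
      simp only [conv2] at h
      exact h
    have ht0 : t ≠ 0 := zpow_ne_zero _ hz
    have hd0 : (d : ℂ) ≠ 0 := Nat.cast_ne_zero.mpr (by omega)
    have sum_zero : ∀ r : ℂ, r ^ d = 1 → r ≠ 1 → ∑ k ∈ Finset.range d, r ^ k = 0 := by
      intro r hr hr1
      rw [geom_sum_eq hr1, hr, sub_self, zero_div]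
    by_cases hq1 : q = 1
    · -- q = 1 case
      have hq'1 : q' = 1 := by
        by_contra hq'1
        have h := Hp0 d (by omega) le_rfl
        rw [hq1, sum_zero q' (zd i') hq'1, mul_zero] at h
        simp only [one_pow, Finset.sum_const, Finset.card_range, nsmul_eq_mul, mul_one] at h
        exact mul_ne_zero (pow_ne_zero _ ht0) hd0 h
      have h2 := Hp0 2 (by omega) hd
      rw [hq1, hq'1] at h2
      simp only [one_pow, Finset.sum_const, Finset.card_range, nsmul_eq_mul, mul_one,
        pow_one] at h2
      have htt : t' = t := by
        have : t * 2 = t' * 2 := by simpa using h2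
        have h2ne : (2 : ℂ) ≠ 0 := two_ne_zero
        exact (mul_right_cancel₀ h2ne this).symm
      refine Or.inl ⟨(zpow_iff hd hζ i' i).mp ?_, (zpow_iff hd hζ j' j).mp htt⟩
      rw [← hqdef, ← hqdef', hq1, hq'1]
    · -- q ≠ 1 case
      have hq'1 : q' ≠ 1 := by
        intro hq'1
        have h := Hp0 d (by omega) le_rfl
        rw [hq'1, sum_zero q (zd i) hq1, mul_zero] at h
        simp only [one_pow, Finset.sum_const, Finset.card_range, nsmul_eq_mul, mul_one] at h
        exact mul_ne_zero (pow_ne_zero _ (zpow_ne_zero _ hz)) hd0 h.symm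
      have H' : ∀ l : ℕ, l < d →
          t ^ l * (q ^ (l + 1) - 1) * (q' - 1) = t' ^ l * (q' ^ (l + 1) - 1) * (q - 1) := by
        intro l hl
        have h := Hp0 (l + 1) (by omega) (by omega)
        simp only [Nat.add_sub_cancel] at h
        have gs : (∑ k ∈ Finset.range (l + 1), q ^ k) * (q - 1) = q ^ (l + 1) - 1 :=
          geom_sum_mul q (l + 1)
        have gs' : (∑ k ∈ Finset.range (l + 1), q' ^ k) * (q' - 1) = q' ^ (l + 1) - 1 :=
          geom_sum_mul q' (l + 1)
        linear_combination (q - 1) * (q' - 1) * h - t ^ l * (q' - 1) * gs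
          + t' ^ l * (q - 1) * gs'
      rcases key d hd q q' t t' (zd i) (zd i') (zd j) (zd j') hq1 hq'1 H' with
        ⟨hqq, htt⟩ | ⟨hqq, htt⟩
      · exact Or.inl ⟨(zpow_iff hd hζ i' i).mp hqq, (zpow_iff hd hζ j' j).mp htt⟩
      · refine Or.inr ⟨(zpow_iff hd hζ i' (-i)).mp ?_, (zpow_iff hd hζ j' (i + j)).mp ?_⟩
        · rw [zpow_neg]; exact hqq
        · rw [zpow_add₀ hz, mul_comm]; exact htt
  · rintro (⟨hi, hj⟩ | ⟨hi, hj⟩) <;> intro l hl1 hl2 p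
    · rw [show ζ ^ (p * i' + (2 * p + (l : ℤ) - 1) * j') = ζ ^ (p * i + (2 * p + (l : ℤ) - 1) * j)
        from (zpow_iff hd hζ _ _).mpr ((hi.mul_left p).add (hj.mul_left _)),
        show (∑ k ∈ Finset.range l, ζ ^ (i' * (k : ℤ))) = ∑ k ∈ Finset.range l, ζ ^ (i * (k : ℤ))
        from Finset.sum_congr rfl fun k _ => (zpow_iff hd hζ _ _).mpr (hi.mul_right _)]
    · rw [show ζ ^ (p * i' + (2 * p + (l : ℤ) - 1) * j')
          = ζ ^ (p * (-i) + (2 * p + (l : ℤ) - 1) * (i + j))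
        from (zpow_iff hd hζ _ _).mpr ((hi.mul_left p).add (hj.mul_left _)),
        show (∑ k ∈ Finset.range l, ζ ^ (i' * (k : ℤ)))
          = ∑ k ∈ Finset.range l, ζ ^ ((-i) * (k : ℤ))
        from Finset.sum_congr rfl fun k _ => (zpow_iff hd hζ _ _).mpr (hi.mul_right _),
        refl_eq hd hζ i j l hl1 p]

end main
end

section
/- Let d ≥ 2 and let ζ ∈ ℂ be a primitive d-th root of unity. For all integers l and p, (1/d) · ∑_{j=0}^{d-1} ∑_{k=0}^{d-1} ζ^{−j·k + (2p+l−1)·k + (p+l−1)·(j−k−1)} = ζ^{(p−1)·(l+p−1)}. -/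
theorem stmt1 (d : ℕ) (hd : 2 ≤ d) (ζ : ℂ) (hζ : IsPrimitiveRoot ζ d) (l p : ℤ) :
    (1 / (d : ℂ)) * ∑ j ∈ Finset.range d, ∑ k ∈ Finset.range d,
      ζ ^ (-(j : ℤ) * (k : ℤ) + (2 * p + l - 1) * (k : ℤ) + (p + l - 1) * ((j : ℤ) - (k : ℤ) - 1)) =
    ζ ^ ((p - 1) * (l + p - 1)) := by
  have hd0 : d ≠ 0 := by omega
  have hζ0 : ζ ≠ 0 := hζ.ne_zero hd0
  have hdC : (d : ℂ) ≠ 0 := Nat.cast_ne_zero.mpr hd0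
  have hzd : ζ ^ (d : ℤ) = 1 := by
    rw [zpow_natCast]; exact hζ.pow_eq_one
  have hdvd : ∀ m : ℤ, (d : ℤ) ∣ m → ζ ^ m = 1 := by
    rintro m ⟨c, rfl⟩
    rw [zpow_mul, hzd, one_zpow]
  have hcong : ∀ a b : ℤ, (d : ℤ) ∣ a - b → ζ ^ a = ζ ^ b := by
    intro a b h
    have h1 := hdvd _ h
    calc ζ ^ a = ζ ^ (b + (a - b)) := by congr 1; ring
      _ = ζ ^ b * ζ ^ (a - b) := zpow_add₀ hζ0 _ _
      _ = ζ ^ b := by rw [h1, mul_one]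
  have hiff : ∀ m : ℤ, ζ ^ m = 1 ↔ (d : ℤ) ∣ m := fun m => hζ.zpow_eq_one_iff_dvd m
  -- inner sum
  have inner : ∀ j : ℕ, ∑ k ∈ Finset.range d,
      ζ ^ (-(j : ℤ) * (k : ℤ) + (2 * p + l - 1) * (k : ℤ) + (p + l - 1) * ((j : ℤ) - (k : ℤ) - 1))
      = (if (d : ℤ) ∣ p - (j : ℤ) then (d : ℂ) else 0) * ζ ^ ((p + l - 1) * ((j : ℤ) - 1)) := by
    intro j
    have hre : ∀ k : ℕ, (-(j : ℤ) * (k : ℤ) + (2 * p + l - 1) * (k : ℤ) + (p + l - 1) * ((j : ℤ) - (k : ℤ) - 1))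
        = (p - (j : ℤ)) * k + (p + l - 1) * ((j : ℤ) - 1) := by intro k; ring
    calc ∑ k ∈ Finset.range d, ζ ^ (-(j : ℤ) * (k : ℤ) + (2 * p + l - 1) * (k : ℤ) + (p + l - 1) * ((j : ℤ) - (k : ℤ) - 1))
        = ∑ k ∈ Finset.range d, (ζ ^ (p - (j : ℤ))) ^ k * ζ ^ ((p + l - 1) * ((j : ℤ) - 1)) := by
          refine Finset.sum_congr rfl fun k _ => ?_
          rw [hre k, zpow_add₀ hζ0, zpow_mul, zpow_natCast]
      _ = (∑ k ∈ Finset.range d, (ζ ^ (p - (j : ℤ))) ^ k) * ζ ^ ((p + l - 1) * ((j : ℤ) - 1)) := by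
          rw [Finset.sum_mul]
      _ = (if (d : ℤ) ∣ p - (j : ℤ) then (d : ℂ) else 0) * ζ ^ ((p + l - 1) * ((j : ℤ) - 1)) := by
          congr 1
          by_cases h : (d : ℤ) ∣ p - (j : ℤ)
          · rw [if_pos h, hdvd _ h]; simp
          · rw [if_neg h]
            have hne : ζ ^ (p - (j : ℤ)) ≠ 1 := fun h1 => h ((hiff _).mp h1)
            rw [geom_sum_eq hne]
            have : (ζ ^ (p - (j : ℤ))) ^ d = 1 := by
              rw [← zpow_natCast, ← zpow_mul, mul_comm, zpow_mul, hzd, one_zpow]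
            rw [this]
            simp
  rw [Finset.sum_congr rfl fun j _ => inner j]
  -- only one j contributes
  set j₀ : ℕ := (p % d).toNat with hj₀
  have hdpos : (0 : ℤ) < d := by exact_mod_cast Nat.pos_of_ne_zero hd0
  have hmod0 : 0 ≤ p % d := Int.emod_nonneg p (by omega)
  have hmodlt : p % d < d := Int.emod_lt_of_pos p hdpos
  have hj₀cast : (j₀ : ℤ) = p % d := Int.toNat_of_nonneg hmod0
  have hj₀mem : j₀ ∈ Finset.range d := by
    rw [Finset.mem_range]
    omega
  have hdvdj₀ : (d : ℤ) ∣ p - (j₀ : ℤ) := by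
    rw [hj₀cast]
    exact Int.dvd_self_sub_of_emod_eq rfl
  rw [Finset.sum_eq_single j₀]
  · rw [if_pos hdvdj₀]
    rw [← mul_assoc, one_div, inv_mul_cancel₀ hdC, one_mul]
    apply hcong
    have : (p + l - 1) * ((j₀ : ℤ) - 1) - (p - 1) * (l + p - 1) = (p + l - 1) * ((j₀ : ℤ) - p) := by ring
    rw [this]
    refine Dvd.dvd.mul_left ?_ _
    rw [show (j₀ : ℤ) - p = -(p - (j₀ : ℤ)) by ring]
    exact dvd_neg.mpr hdvdj₀
  · intro j hj hne
    rw [if_neg, zero_mul]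
    rw [Finset.mem_range] at hj
    intro hdvd'
    apply hne
    have h2 : (j : ℤ) % d = p % d := by
      rw [Int.emod_eq_emod_iff_emod_sub_eq_zero]
      apply Int.emod_eq_zero_of_dvd
      rw [show (j : ℤ) - p = -(p - (j : ℤ)) by ring]
      exact dvd_neg.mpr hdvd'
    have h3 : (j : ℤ) % d = j := Int.emod_eq_of_lt (by positivity) (by exact_mod_cast hj)
    have : (j : ℤ) = j₀ := by omega
    exact_mod_cast this
  · intro h; exact absurd hj₀mem h
end

section
/- Let d ≥ 2 and let ζ ∈ ℂ be a primitive d-th root of unity. Then ∑_{l=1}^{d} ∑_{p=0}^{d-1} (ζ^{p} · ∑_{k=0}^{l-1} ζ^{k}) · (ζ^{1-l-p} · ∑_{k=0}^{l-1} ζ^{k}) = 2d² / ((1−ζ)(1−ζ^{-1})). -/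
theorem stmt2 (d : ℕ) (hd : 2 ≤ d) (ζ : ℂ) (hζ : IsPrimitiveRoot ζ d) :
    ∑ l ∈ Finset.Icc 1 d, ∑ p ∈ Finset.range d,
      ((ζ ^ (p : ℤ)) * ∑ k ∈ Finset.range l, ζ ^ (k : ℤ)) *
      ((ζ ^ (1 - (l : ℤ) - (p : ℤ))) * ∑ k ∈ Finset.range l, ζ ^ (k : ℤ)) =
    2 * (d : ℂ) ^ 2 / ((1 - ζ) * (1 - ζ⁻¹)) := by
  have hd1 : 1 < d := hd
  have hζ1 : ζ ≠ 1 := hζ.ne_one hd1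
  have hζ0 : ζ ≠ 0 := hζ.ne_zero (by omega)
  have hsub : ζ - 1 ≠ 0 := sub_ne_zero.mpr hζ1
  have hgeo : ∑ k ∈ Finset.range d, ζ ^ k = 0 := hζ.geom_sum_eq_zero hd1
  have hgeo' : ∑ k ∈ Finset.range d, (ζ⁻¹) ^ k = 0 := hζ.inv.geom_sum_eq_zero hd1
  -- sums over Icc 1 d vanish
  have hIcc : Finset.Icc 1 d = Finset.Ico 1 (d + 1) := by rw [Finset.Ico_add_one_right_eq_Icc]
  have hsum1 : ∑ l ∈ Finset.Icc 1 d, ζ ^ l = 0 := by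
    rw [hIcc, Finset.sum_Ico_eq_sum_range]
    simp only [Nat.add_sub_cancel, pow_add, pow_one]
    rw [← Finset.mul_sum, hgeo, mul_zero]
  have hsum2 : ∑ l ∈ Finset.Icc 1 d, (ζ⁻¹) ^ l = 0 := by
    rw [hIcc, Finset.sum_Ico_eq_sum_range]
    simp only [Nat.add_sub_cancel, pow_add, pow_one]
    rw [← Finset.mul_sum, hgeo', mul_zero]
  have key : ∀ l ∈ Finset.Icc 1 d,
      (∑ p ∈ Finset.range d,
        ((ζ ^ (p : ℤ)) * ∑ k ∈ Finset.range l, ζ ^ (k : ℤ)) *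
        ((ζ ^ (1 - (l : ℤ) - (p : ℤ))) * ∑ k ∈ Finset.range l, ζ ^ (k : ℤ))) =
      (d : ℂ) * ζ / (ζ - 1) ^ 2 * (ζ ^ l - 2 + (ζ⁻¹) ^ l) := by
    intro l hl
    have hterm : ∀ p ∈ Finset.range d,
        ((ζ ^ (p : ℤ)) * ∑ k ∈ Finset.range l, ζ ^ (k : ℤ)) *
        ((ζ ^ (1 - (l : ℤ) - (p : ℤ))) * ∑ k ∈ Finset.range l, ζ ^ (k : ℤ)) =
        ζ * (ζ ^ l)⁻¹ * (∑ k ∈ Finset.range l, ζ ^ k) ^ 2 := by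
      intro p _
      have h1 : (ζ ^ (p : ℤ)) * (ζ ^ (1 - (l : ℤ) - (p : ℤ))) = ζ * (ζ ^ l)⁻¹ := by
        rw [← zpow_add₀ hζ0]
        have : (p : ℤ) + (1 - (l : ℤ) - (p : ℤ)) = 1 - (l : ℤ) := by ring
        rw [this, zpow_sub₀ hζ0, zpow_one, zpow_natCast, div_eq_mul_inv]
      have h2 : (∑ k ∈ Finset.range l, ζ ^ (k : ℤ)) = ∑ k ∈ Finset.range l, ζ ^ k := by
        simp [zpow_natCast]
      rw [h2, mul_mul_mul_comm, h1, sq]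
    rw [Finset.sum_congr rfl hterm, Finset.sum_const, Finset.card_range, nsmul_eq_mul]
    have hS : (∑ k ∈ Finset.range l, ζ ^ k) = (ζ ^ l - 1) / (ζ - 1) := geom_sum_eq hζ1 l
    rw [hS]
    have hxl : ζ ^ l ≠ 0 := pow_ne_zero _ hζ0
    rw [inv_pow]
    field_simp
    ring
  rw [Finset.sum_congr rfl key, ← Finset.mul_sum]
  rw [Finset.sum_add_distrib, Finset.sum_sub_distrib, hsum1, hsum2, Finset.sum_const,
    Nat.card_Icc, Nat.add_sub_cancel, nsmul_eq_mul, zero_sub, add_zero]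
  have hdc : (d : ℂ) ≠ 0 := Nat.cast_ne_zero.mpr (by omega)
  have hinv1 : ζ⁻¹ ≠ 1 := by simpa [inv_eq_one] using hζ1
  have hA : ((ζ - 1) ^ 2 : ℂ) ≠ 0 := pow_ne_zero _ hsub
  have hB : ((1 - ζ) * (1 - ζ⁻¹) : ℂ) ≠ 0 :=
    mul_ne_zero (sub_ne_zero.mpr hζ1.symm) (sub_ne_zero.mpr hinv1.symm)
  rw [div_mul_eq_mul_div, div_eq_div_iff hA hB]
  field_simp
  ring
end

section
/- Let d ≥ 2, let ζ ∈ ℂ be a primitive d-th root of unity, and let 𝒮 be the d × d complex matrix with entries 𝒮_{a,b} = ζ^{a·b} for a, b ∈ {0,…,d−1}. For all k, k' ∈ {0,…,d−1}, the determinant of the (d−1) × (d−1) matrix obtained from 𝒮 by deleting the k-th row and the k'-th column equals (−1)^{k+k'} · ζ^{−k·k'} · δ(d)/d, where δ(d) = ∏_{0 ≤ a < b ≤ d−1} (ζ^{b} − ζ^{a}) = det 𝒮. -/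
private theorem prodswap (N : ℕ) (g : ℕ → ℕ → ℂ) :
    ∏ i : Fin N, ∏ j ∈ Finset.Ioi i, g (i : ℕ) (j : ℕ) =
      ∏ b ∈ Finset.range N, ∏ a ∈ Finset.range b, g a b := by
  rw [Finset.prod_comm' (t' := Finset.univ) (s' := fun j => Finset.Iio j)
    (fun i j => by simp [Finset.mem_Ioi, Finset.mem_Iio, and_comm])]
  have h1 : ∀ y : Fin N, ∏ x ∈ Finset.Iio y, g (x:ℕ) (y:ℕ)
      = ∏ a ∈ Finset.range (y : ℕ), g a (y:ℕ) := by
    intro y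
    refine Finset.prod_bij (fun x _ => (x:ℕ)) ?_ ?_ ?_ ?_
    · intro x hx; simpa using Finset.mem_Iio.mp hx
    · intro a _ b _ h; exact Fin.val_injective h
    · intro a ha
      exact ⟨⟨a, lt_trans (Finset.mem_range.mp ha) y.isLt⟩,
        Finset.mem_Iio.mpr (Finset.mem_range.mp ha), rfl⟩
    · intro x _; rfl
  simp_rw [h1]
  exact Fin.prod_univ_eq_prod_range (fun b => ∏ a ∈ Finset.range b, g a b) N

theorem stmt3 (n : ℕ) (hn : 1 ≤ n) (ζ : ℂ) (hζ : IsPrimitiveRoot ζ (n + 1))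
    (S : Matrix (Fin (n + 1)) (Fin (n + 1)) ℂ)
    (hS : ∀ a b : Fin (n + 1), S a b = ζ ^ ((a : ℕ) * (b : ℕ)))
    (δ : ℂ) (hδ : δ = ∏ b ∈ Finset.range (n + 1), ∏ a ∈ Finset.range b, (ζ ^ b - ζ ^ a))
    (k k' : Fin (n + 1)) :
    δ = S.det ∧
    (S.submatrix k.succAbove k'.succAbove).det =
      (-1 : ℂ) ^ ((k : ℕ) + (k' : ℕ)) * ζ ^ (-((k : ℕ) : ℤ) * ((k' : ℕ) : ℤ)) * δ / ((n : ℂ) + 1) := by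
  have hζ0 : ζ ≠ 0 := hζ.ne_zero (Nat.succ_ne_zero n)
  have hSv : S = Matrix.vandermonde (fun a : Fin (n+1) => ζ ^ (a:ℕ)) := by
    ext a b; rw [hS, Matrix.vandermonde_apply, ← pow_mul]
  have hdet : S.det = δ := by
    rw [hSv, Matrix.det_vandermonde, hδ]
    exact prodswap (n+1) (fun a b => ζ ^ b - ζ ^ a)
  refine ⟨hdet.symm, ?_⟩
  set T : Matrix (Fin (n+1)) (Fin (n+1)) ℂ :=
    Matrix.of (fun a b : Fin (n+1) => ζ ^ (-((a:ℕ):ℤ) * ((b:ℕ):ℤ))) with hT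
  have hne : ((n:ℂ) + 1) ≠ 0 := by
    have : ((n+1 : ℕ) : ℂ) ≠ 0 := Nat.cast_ne_zero.mpr (Nat.succ_ne_zero n)
    push_cast at this; exact this
  have key : S * T = ((n:ℂ)+1) • 1 := by
    ext a b
    simp only [Matrix.mul_apply, Matrix.smul_apply, hS, hT, Matrix.of_apply]
    have hterm : ∀ c : Fin (n+1), ζ ^ ((a:ℕ)*(c:ℕ)) * ζ ^ (-((c:ℕ):ℤ) * ((b:ℕ):ℤ))
        = (ζ ^ (((a:ℕ):ℤ) - ((b:ℕ):ℤ))) ^ (c:ℕ) := by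
      intro c
      rw [← zpow_natCast ζ ((a:ℕ)*(c:ℕ)), ← zpow_add₀ hζ0, ← zpow_natCast (ζ ^ (((a:ℕ):ℤ) - ((b:ℕ):ℤ))) (c:ℕ), ← zpow_mul]
      congr 1; push_cast; ring
    rw [Finset.sum_congr rfl (fun c _ => hterm c),
      Fin.sum_univ_eq_sum_range (fun i => (ζ ^ (((a:ℕ):ℤ) - ((b:ℕ):ℤ))) ^ i) (n+1)]
    by_cases h : a = b
    · subst h
      simp [Matrix.one_apply_eq]
    · have hw1 : ζ ^ (((a:ℕ):ℤ) - ((b:ℕ):ℤ)) ≠ 1 := by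
        intro hw
        have hdvd := (hζ.zpow_eq_one_iff_dvd _).mp hw
        have h0 : ((a:ℕ):ℤ) - ((b:ℕ):ℤ) = 0 := by
          refine Int.eq_zero_of_abs_lt_dvd hdvd ?_
          have ha := a.isLt; have hb := b.isLt
          rw [abs_sub_lt_iff]
          constructor <;> push_cast <;> omega
        apply h
        have : (a:ℕ) = (b:ℕ) := by exact_mod_cast sub_eq_zero.mp h0
        exact Fin.ext this
      rw [geom_sum_eq hw1]
      have hwpow : (ζ ^ (((a:ℕ):ℤ) - ((b:ℕ):ℤ))) ^ (n+1) = 1 := by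
        rw [← zpow_natCast (ζ ^ (((a:ℕ):ℤ) - ((b:ℕ):ℤ))), ← zpow_mul, mul_comm, zpow_mul,
          zpow_natCast, hζ.pow_eq_one, one_zpow]
      rw [hwpow, Matrix.one_apply_ne h]
      simp
  have hsmul : ((n:ℂ)+1) • S.adjugate = S.det • T := by
    calc ((n:ℂ)+1) • S.adjugate = S.adjugate * (((n:ℂ)+1) • 1) := by
          rw [Matrix.mul_smul, Matrix.mul_one]
      _ = S.adjugate * (S * T) := by rw [key]
      _ = (S.adjugate * S) * T := by rw [Matrix.mul_assoc]
      _ = S.det • T := by rw [Matrix.adjugate_mul, Matrix.smul_mul, Matrix.one_mul]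
  have hentry : ((n:ℂ)+1) * S.adjugate k' k = δ * ζ ^ (-((k:ℕ):ℤ) * ((k':ℕ):ℤ)) := by
    have := congrFun (congrFun hsmul k') k
    simp only [Matrix.smul_apply, smul_eq_mul, hT, Matrix.of_apply, hdet] at this
    rw [this]; congr 1; ring
  have hadj := Matrix.adjugate_fin_succ_eq_det_submatrix S k' k
  have hsign : ((-1 : ℂ) ^ ((k:ℕ) + (k':ℕ))) * ((-1 : ℂ) ^ ((k:ℕ) + (k':ℕ))) = 1 := by
    rw [← pow_add, ← two_mul, pow_mul]; norm_num
  have hdm : (S.submatrix k.succAbove k'.succAbove).det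
      = (-1 : ℂ) ^ ((k:ℕ) + (k':ℕ)) * S.adjugate k' k := by
    rw [hadj, ← mul_assoc, hsign, one_mul]
  rw [hdm, eq_div_iff hne]
  linear_combination ((-1:ℂ) ^ ((k:ℕ) + (k':ℕ))) * hentry
end

section
/- Let d ≥ 2 be a natural number and let i, j be integers with 0 ≤ i < j ≤ d−1. Let r be the unique integer with 0 ≤ r < d and r ≡ i + j (mod d). Then d(1−d²) − 6(i² + d·i) − 6(j² + d·j) − 6·∑_{k=0}^{d−1}(k² + d·k) + 6(r² + d·r) ≡ 12·i·j (mod 12d). -/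
lemma sum_sq_range (n : ℕ) : 6 * ∑ k ∈ Finset.range n, (k : ℤ) ^ 2 = n * (n - 1) * (2 * n - 1) := by
  induction n with
  | zero => simp
  | succ n ih =>
    rw [Finset.sum_range_succ]
    push_cast
    push_cast at ih
    ring_nf
    ring_nf at ih
    linarith

lemma sum_id_range (n : ℕ) : 2 * ∑ k ∈ Finset.range n, (k : ℤ) = n * (n - 1) := by
  induction n with
  | zero => simp
  | succ n ih =>
    rw [Finset.sum_range_succ]
    push_cast
    push_cast at ih
    ring_nf
    ring_nf at ih
    linarith

theorem stmt6 (d : ℕ) (hd : 2 ≤ d) (i j : ℤ) (hi : 0 ≤ i) (hij : i < j) (hj : j ≤ (d : ℤ) - 1)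
    (r : ℤ) (hr0 : 0 ≤ r) (hrd : r < (d : ℤ)) (hr : r ≡ i + j [ZMOD (d : ℤ)]) :
    (d : ℤ) * (1 - (d : ℤ) ^ 2) - 6 * (i ^ 2 + (d : ℤ) * i) - 6 * (j ^ 2 + (d : ℤ) * j)
      - 6 * ∑ k ∈ Finset.range d, ((k : ℤ) ^ 2 + (d : ℤ) * (k : ℤ)) + 6 * (r ^ 2 + (d : ℤ) * r)
      ≡ 12 * i * j [ZMOD (12 * (d : ℤ))] := by
  have hd' : (2 : ℤ) ≤ (d : ℤ) := by exact_mod_cast hd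
  -- closed form for the sum
  have hS : 6 * ∑ k ∈ Finset.range d, ((k : ℤ) ^ 2 + (d : ℤ) * (k : ℤ))
      = (d : ℤ) * ((d : ℤ) - 1) * (5 * (d : ℤ) - 1) := by
    rw [Finset.sum_add_distrib, ← Finset.mul_sum]
    linear_combination sum_sq_range d + 3 * (d : ℤ) * sum_id_range d
  -- r = i + j or r = i + j - d
  obtain ⟨c, hc⟩ := (Int.modEq_iff_dvd.mp hr)
  -- hc : i + j - r = d * c
  have hc0 : 0 ≤ c := by
    by_contra h
    push_neg at h
    have : c ≤ -1 := by omega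
    nlinarith
  have hc1 : c ≤ 1 := by
    by_contra h
    push_neg at h
    have : 2 ≤ c := by omega
    nlinarith
  -- evenness of d(d-1)
  obtain ⟨m, hm⟩ := Int.even_mul_succ_self ((d : ℤ) - 1)
  -- hm : (d-1) * (d-1+1) = m + m
  rw [Int.modEq_iff_dvd]
  rw [hS]
  interval_cases c
  · exact ⟨m, by linear_combination 6 * (d:ℤ) * hm + (6*(i+j+r) + 6*(d:ℤ)) * hc⟩
  · exact ⟨m + i + j, by linear_combination 6 * (d:ℤ) * hm + (6*(i+j+r)) * hc⟩
end

section
/- Let d ≥ 2 and let ζ ∈ ℂ be a primitive d-th root of unity. For all natural numbers l, l' with 1 ≤ l, l' ≤ d and all integers p, p': ζ^{p} · (∑_{a=0}^{l−1} ζ^{a}) · ζ^{−l·p' + (2p'+l'−1)·(1−p)} · (∑_{b=0}^{l'−1} ζ^{−l·b}) = (ζ^{2p+l+2p'+l'−1}/(1−ζ)) · ζ^{−l·l' − l·p' − p·l' − 2p·p'} · (1 − ζ^{l·l'}). -/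
theorem stmt10 (d : ℕ) (hd : 2 ≤ d) (ζ : ℂ) (hζ : IsPrimitiveRoot ζ d)
    (l l' : ℕ) (hl : 1 ≤ l) (hld : l ≤ d) (hl' : 1 ≤ l') (hl'd : l' ≤ d) (p p' : ℤ) :
    ζ ^ p * (∑ a ∈ Finset.range l, ζ ^ (a : ℤ)) *
      (ζ ^ (-(l : ℤ) * p' + (2 * p' + (l' : ℤ) - 1) * (1 - p)) *
        ∑ b ∈ Finset.range l', ζ ^ (-(l : ℤ) * (b : ℤ))) =
    (ζ ^ (2 * p + (l : ℤ) + 2 * p' + (l' : ℤ) - 1) / (1 - ζ)) *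
      ζ ^ (-(l : ℤ) * (l' : ℤ) - (l : ℤ) * p' - p * (l' : ℤ) - 2 * p * p') *
      (1 - ζ ^ ((l : ℤ) * (l' : ℤ))) := by
  have hd0 : (d : ℕ) ≠ 0 := by omega
  have hz0 : ζ ≠ 0 := hζ.ne_zero hd0
  have hz1 : ζ ≠ 1 := hζ.ne_one hd
  have h1z : (1 : ℂ) - ζ ≠ 0 := sub_ne_zero.mpr hz1.symm
  rcases eq_or_lt_of_le hld with rfl | hlt
  · -- l = d
    have hgeo : (∑ a ∈ Finset.range l, ζ ^ (a : ℤ)) = 0 := by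
      simp_rw [zpow_natCast]
      exact hζ.geom_sum_eq_zero hd
    have hpow : ζ ^ ((l : ℤ) * (l' : ℤ)) = 1 := by
      rw [zpow_mul, zpow_natCast, zpow_natCast, hζ.pow_eq_one, one_pow]
    rw [hgeo, hpow]
    ring
  · have hzl : ζ ^ l ≠ 1 := hζ.pow_ne_one_of_pos_of_lt (by omega) hlt
    have hzl' : ζ ^ (-(l:ℤ)) ≠ 1 := by
      rw [zpow_neg, zpow_natCast]
      simpa using inv_ne_one.mpr hzl
    have hsum1 : (∑ a ∈ Finset.range l, ζ ^ (a : ℤ)) = (ζ ^ l - 1) / (ζ - 1) := by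
      simp_rw [zpow_natCast]; exact geom_sum_eq hz1 l
    have hsum2 : (∑ b ∈ Finset.range l', ζ ^ (-(l : ℤ) * (b : ℤ))) =
        ((ζ ^ (-(l:ℤ))) ^ l' - 1) / (ζ ^ (-(l:ℤ)) - 1) := by
      have h : (∑ b ∈ Finset.range l', ζ ^ (-(l : ℤ) * (b : ℤ))) =
          ∑ b ∈ Finset.range l', (ζ ^ (-(l : ℤ))) ^ b := by
        refine Finset.sum_congr rfl fun b _ => ?_
        rw [← zpow_natCast (ζ ^ (-(l : ℤ))), ← zpow_mul]
      rw [h, geom_sum_eq hzl' l']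
    rw [hsum1, hsum2]
    have e1 : (ζ ^ (-(l:ℤ))) ^ l' = ζ ^ (-(l:ℤ) * (l':ℤ)) := by
      rw [← zpow_natCast (ζ ^ (-(l:ℤ))), ← zpow_mul]
    have e2 : ζ ^ (-(l:ℤ) * (l':ℤ)) - 1 = ζ ^ (-(l:ℤ) * (l':ℤ)) * (1 - ζ ^ ((l:ℤ) * (l':ℤ))) := by
      rw [mul_sub, mul_one, ← zpow_add₀ hz0]; simp
    have e3 : ζ ^ (-(l:ℤ)) - 1 = ζ ^ (-(l:ℤ)) * (1 - ζ ^ ((l:ℤ))) := by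
      rw [mul_sub, mul_one, ← zpow_add₀ hz0]; simp
    have e4 : ζ ^ l - 1 = -(1 - ζ ^ ((l:ℤ))) := by rw [zpow_natCast]; ring
    have e5 : ζ - 1 = -(1 - ζ) := by ring
    have h1l : (1:ℂ) - ζ ^ ((l:ℤ)) ≠ 0 := by
      rw [zpow_natCast]; exact sub_ne_zero.mpr (Ne.symm hzl)
    have hzne : ∀ m : ℤ, ζ ^ m ≠ 0 := fun m => zpow_ne_zero m hz0
    rw [e1, e2, e3, e4, e5]
    field_simp
    have key : ζ ^ p * ζ ^ (-(l:ℤ) * p' + (2 * p' + (l':ℤ) - 1) * (1 - p)) * ζ ^ (-(l:ℤ) * (l':ℤ)) =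
        ζ ^ (-(l:ℤ)) * ζ ^ (2 * p + (l:ℤ) + 2 * p' + (l':ℤ) - 1) *
          ζ ^ (-(l:ℤ) * (l':ℤ) - (l:ℤ) * p' - p * (l':ℤ) - 2 * p * p') := by
      simp only [← zpow_add₀ hz0]; congr 1; ring
    linear_combination key * (1 - ζ ^ ((l:ℤ) * (l':ℤ)))
end

section
/- Let d ≥ 2 and let ζ ∈ ℂ be a primitive d-th root of unity. In the group algebra ℂ[(ℤ/dℤ) × (ℤ/dℤ)], for all integers l, p: (1/d²) · ∑_{j=0}^{d−1} ∑_{j'=0}^{d−1} ∑_{k=0}^{d−1} ∑_{k'=0}^{d−1} ζ^{−k·j − k'·j' − (2p+l−1)·k' + (p+l−1)·(k'+j)} · e_{(−k−1,\; j'+k+1)} = e_{(−l−p,\; l)}, where e_{(a,b)} denotes the standard basis element of the group algebra at the element (a mod d, b mod d) of (ℤ/dℤ) × (ℤ/dℤ). -/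
lemma orth_s12 {d : ℕ} (hd : 2 ≤ d) {ζ : ℂ} (hζ : IsPrimitiveRoot ζ d) (m : ℤ) :
    ∑ k ∈ Finset.range d, ζ ^ (m * (k : ℤ)) = if ((m : ZMod d) = 0) then (d : ℂ) else 0 := by
  by_cases h : (m : ZMod d) = 0
  · rw [if_pos h]
    obtain ⟨t, rfl⟩ := (ZMod.intCast_zmod_eq_zero_iff_dvd m d).1 h
    have h1 : ∀ k ∈ Finset.range d, ζ ^ (((d:ℤ) * t) * (k:ℤ)) = 1 := by
      intro k _
      have : ζ ^ ((d:ℤ) * t * k) = (ζ ^ (d:ℕ)) ^ (t * (k:ℤ)) := by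
        rw [← zpow_natCast, ← zpow_mul, mul_assoc]
      rw [this, hζ.pow_eq_one, one_zpow]
    rw [Finset.sum_congr rfl h1]
    simp
  · rw [if_neg h]
    have hne : ζ ^ m ≠ 1 := by
      intro h1
      exact h ((ZMod.intCast_zmod_eq_zero_iff_dvd m d).2 ((hζ.zpow_eq_one_iff_dvd m).1 h1))
    have h2 : ∑ k ∈ Finset.range d, ζ ^ (m * (k:ℤ)) = ∑ k ∈ Finset.range d, (ζ ^ m) ^ k := by
      refine Finset.sum_congr rfl fun k _ => ?_
      rw [← zpow_natCast (ζ ^ m) k, ← zpow_mul]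
    rw [h2, geom_sum_eq hne]
    have h3 : (ζ ^ m) ^ d = 1 := by
      rw [← zpow_natCast (ζ^m) d, ← zpow_mul, mul_comm, zpow_mul, zpow_natCast, hζ.pow_eq_one, one_zpow]
    rw [h3]; simp

lemma pick {M : Type*} [AddCommMonoid M] {d : ℕ} (hd : 2 ≤ d) (c : ZMod d) (f : ℕ → M) :
    ∑ x ∈ Finset.range d, (if ((x : ZMod d) = c) then f x else 0) = f c.val := by
  haveI : NeZero d := ⟨by omega⟩
  rw [Finset.sum_eq_single_of_mem c.val (Finset.mem_range.2 (ZMod.val_lt c))]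
  · rw [if_pos (ZMod.natCast_rightInverse c)]
  · intro x hx hne
    rw [if_neg]
    intro hc
    exact hne (by rw [← ZMod.val_cast_of_lt (Finset.mem_range.1 hx), hc])

lemma sum_if {M : Type*} [AddCommMonoid M] (s : Finset ℕ) (P : Prop) [Decidable P] (X : ℕ → M) :
    ∑ k ∈ s, (if P then X k else 0) = if P then ∑ k ∈ s, X k else 0 := by
  split <;> simp

theorem stmt12 (d : ℕ) (hd : 2 ≤ d) (ζ : ℂ) (hζ : IsPrimitiveRoot ζ d) (l p : ℤ) :
    (1 / (d : ℂ) ^ 2) •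
      ∑ j ∈ Finset.range d, ∑ j' ∈ Finset.range d, ∑ k ∈ Finset.range d, ∑ k' ∈ Finset.range d,
        ζ ^ (-(k : ℤ) * (j : ℤ) - (k' : ℤ) * (j' : ℤ) - (2 * p + l - 1) * (k' : ℤ)
              + (p + l - 1) * ((k' : ℤ) + (j : ℤ))) •
          (AddMonoidAlgebra.single (((-(k : ℤ) - 1 : ℤ) : ZMod d), (((j' : ℤ) + (k : ℤ) + 1 : ℤ) : ZMod d))
              (1 : ℂ) : AddMonoidAlgebra ℂ (ZMod d × ZMod d)) =
    (AddMonoidAlgebra.single (((-l - p : ℤ) : ZMod d), ((l : ℤ) : ZMod d)) (1 : ℂ)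
      : AddMonoidAlgebra ℂ (ZMod d × ZMod d)) := by
  haveI : NeZero d := ⟨by omega⟩
  have hζ0 : ζ ≠ 0 := hζ.ne_zero (by omega)
  set c1 : ZMod d := ((-p : ℤ) : ZMod d) with hc1def
  set c2 : ZMod d := ((p + l - 1 : ℤ) : ZMod d) with hc2def
  set v : ℕ → ℕ → AddMonoidAlgebra ℂ (ZMod d × ZMod d) := fun k j' =>
    (AddMonoidAlgebra.single (((-(k : ℤ) - 1 : ℤ) : ZMod d), (((j' : ℤ) + (k : ℤ) + 1 : ℤ) : ZMod d))
      (1 : ℂ)) with hv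
  have hc1 : ∀ j' : ℕ, ((((-(j':ℤ) - p : ℤ)) : ZMod d) = 0) ↔ ((j' : ZMod d) = c1) := by
    intro j'
    push_cast [hc1def]
    constructor
    · intro h; linear_combination -h
    · intro h; linear_combination -h
  have hc2 : ∀ k : ℕ, ((((p + l - 1 - (k:ℤ) : ℤ)) : ZMod d) = 0) ↔ ((k : ZMod d) = c2) := by
    intro k
    push_cast [hc2def]
    constructor
    · intro h; linear_combination -h
    · intro h; linear_combination -h
  -- step 1: collapse k'
  have step1 : ∀ j j' k : ℕ,
      (∑ k' ∈ Finset.range d,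
        ζ ^ (-(k : ℤ) * (j : ℤ) - (k' : ℤ) * (j' : ℤ) - (2 * p + l - 1) * (k' : ℤ)
              + (p + l - 1) * ((k' : ℤ) + (j : ℤ))) • v k j')
      = ((if (((-(j':ℤ) - p : ℤ) : ZMod d) = 0) then (d:ℂ) else 0)
          * ζ ^ ((p + l - 1 - k) * (j:ℤ))) • v k j' := by
    intro j j' k
    have hsplit : ∀ k' : ℕ,
        ζ ^ (-(k : ℤ) * (j : ℤ) - (k' : ℤ) * (j' : ℤ) - (2 * p + l - 1) * (k' : ℤ)
              + (p + l - 1) * ((k' : ℤ) + (j : ℤ)))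
        = ζ ^ ((-(j':ℤ) - p) * (k':ℤ)) * ζ ^ ((p + l - 1 - k) * (j:ℤ)) := by
      intro k'
      rw [← zpow_add₀ hζ0]
      congr 1; ring
    simp_rw [hsplit, ← Finset.sum_smul, ← Finset.sum_mul, orth_s12 hd hζ]
  refine Eq.trans (congrArg (fun s => (1 / (d : ℂ) ^ 2) • s) (Finset.sum_congr rfl fun j _ => Finset.sum_congr rfl fun j' _ => Finset.sum_congr rfl fun k _ => step1 j j' k)) ?_
  -- swap sums: bring j innermost
  rw [Finset.sum_comm]
  have swap2 : ∀ j' : ℕ,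
      (∑ j ∈ Finset.range d, ∑ k ∈ Finset.range d,
        ((if (((-(j':ℤ) - p : ℤ) : ZMod d) = 0) then (d:ℂ) else 0)
          * ζ ^ ((p + l - 1 - k) * (j:ℤ))) • v k j')
      = ∑ k ∈ Finset.range d,
          ((if (((-(j':ℤ) - p : ℤ) : ZMod d) = 0) then (d:ℂ) else 0)
            * (if (((p + l - 1 - (k:ℤ) : ℤ) : ZMod d) = 0) then (d:ℂ) else 0)) • v k j' := by
    intro j'
    rw [Finset.sum_comm]
    refine Finset.sum_congr rfl fun k _ => ?_
    rw [← Finset.sum_smul, ← Finset.mul_sum, orth_s12 hd hζ]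
  simp_rw [swap2, hc1, hc2, ite_mul, zero_mul, mul_ite, mul_zero, ite_smul, zero_smul,
    sum_if, pick hd c2, pick hd c1]
  rw [smul_smul]
  have hdc : ((d:ℂ)) ≠ 0 := Nat.cast_ne_zero.2 (by omega)
  have hcoef : (1 / (d : ℂ) ^ 2) * ((d:ℂ) * (d:ℂ)) = 1 := by field_simp
  rw [hcoef, one_smul, hv]
  have hcoord1 : ((-(c2.val : ℤ) - 1 : ℤ) : ZMod d) = ((-l - p : ℤ) : ZMod d) := by
    push_cast [ZMod.natCast_val, ZMod.cast_id, hc2def]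
    ring
  have hcoord2 : (((c1.val : ℤ) + (c2.val : ℤ) + 1 : ℤ) : ZMod d) = ((l : ℤ) : ZMod d) := by
    push_cast [ZMod.natCast_val, ZMod.cast_id, hc1def, hc2def]
    ring
  simp only [hcoord1, hcoord2]
end
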